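/- arXiv:1410.6576 — 4 statements merged into one kernel-verified Lean document; each statement's English description precedes it below -/
import Mathlib

section
/- Let g, h : ℂ² → ℂ be holomorphic on a polydisc {(x,y) : |x|, |y| < r}, vanishing at (0,0), and suppose sup|g|, sup|h| < 1/100 and sup|∂g/∂y|, sup|∂h/∂y| ≤ M on this polydisc with (M + M)·r < 1/100 (so r·(‖g‖_{C¹} + ‖h‖_{C¹}) < 1/100). Fix x₀ with |x₀| < r and define z(θ) = 1/(x₀(1 + g(x₀,θ))) and w(θ) = θ(1 + h(x₀,θ))/(x₀(1 + g(x₀,θ))) for |θ| < r. Then for all such θ, |(dz/dθ)/(dw/dθ)| < 2·‖g‖_{C¹} where ‖g‖_{C¹} bounds |g| and its first derivatives on the polydisc. -/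
open Complex

/-- Verticality lemma in Favre's normal coordinates: with
`z(θ) = 1/(x₀(1+g(x₀,θ)))` and `w(θ) = θ(1+h(x₀,θ))/(x₀(1+g(x₀,θ)))` on the
polydisc `{|x|,|y| < r}`, under the smallness assumptions the quotient of
derivatives satisfies `|z'(θ)/w'(θ)| < 2‖g‖_{C¹}`. -/
theorem stmt5 (r M K : ℝ) (hr : 0 < r) (hK : 0 < K)
    (g h : ℂ → ℂ → ℂ)
    (hg00 : g 0 0 = 0) (hh00 : h 0 0 = 0)
    (hgdiff : ∀ x y : ℂ, ‖x‖ < r → ‖y‖ < r →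
      DifferentiableAt ℂ (g x) y)
    (hhdiff : ∀ x y : ℂ, ‖x‖ < r → ‖y‖ < r →
      DifferentiableAt ℂ (h x) y)
    (hgsmall : ∀ x y : ℂ, ‖x‖ < r → ‖y‖ < r →
      ‖g x y‖ < 1 / 100)
    (hhsmall : ∀ x y : ℂ, ‖x‖ < r → ‖y‖ < r →
      ‖h x y‖ < 1 / 100)
    (hgM : ∀ x y : ℂ, ‖x‖ < r → ‖y‖ < r →
      ‖deriv (g x) y‖ ≤ M)
    (hhM : ∀ x y : ℂ, ‖x‖ < r → ‖y‖ < r →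
      ‖deriv (h x) y‖ ≤ M)
    (hMr : (M + M) * r < 1 / 100)
    (hKg : ∀ x y : ℂ, ‖x‖ < r → ‖y‖ < r →
      ‖g x y‖ ≤ K ∧ ‖deriv (g x) y‖ ≤ K)
    (hKh : ∀ x y : ℂ, ‖x‖ < r → ‖y‖ < r →
      ‖h x y‖ ≤ K ∧ ‖deriv (h x) y‖ ≤ K)
    (x₀ : ℂ) (hx₀ : x₀ ≠ 0) (hx₀r : ‖x₀‖ < r)
    (z w : ℂ → ℂ)
    (hz : ∀ θ : ℂ, z θ = 1 / (x₀ * (1 + g x₀ θ)))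
    (hw : ∀ θ : ℂ, w θ = θ * (1 + h x₀ θ) / (x₀ * (1 + g x₀ θ))) :
    ∀ θ : ℂ, ‖θ‖ < r →
      ‖deriv z θ / deriv w θ‖ < 2 * K := by
  intro θ hθ
  have hz' : z = fun t => 1 / (x₀ * (1 + g x₀ t)) := funext hz
  have hw' : w = fun t => t * (1 + h x₀ t) / (x₀ * (1 + g x₀ t)) := funext hw
  set gv := g x₀ θ with hgv
  set hv := h x₀ θ with hhv
  set G' := deriv (g x₀) θ with hG'
  set H' := deriv (h x₀) θ with hH'
  have ag : ‖gv‖ < 1 / 100 := hgsmall _ _ hx₀r hθ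
  have ah : ‖hv‖ < 1 / 100 := hhsmall _ _ hx₀r hθ
  have aG : ‖G'‖ ≤ M := hgM _ _ hx₀r hθ
  have aH : ‖H'‖ ≤ M := hhM _ _ hx₀r hθ
  have aGK : ‖G'‖ ≤ K := (hKg _ _ hx₀r hθ).2
  have hM0 : (0:ℝ) ≤ M := le_trans (norm_nonneg _) aG
  have ag0 : (0:ℝ) ≤ ‖gv‖ := norm_nonneg _
  have ah0 : (0:ℝ) ≤ ‖hv‖ := norm_nonneg _
  have aG0 : (0:ℝ) ≤ ‖G'‖ := norm_nonneg _
  have aH0 : (0:ℝ) ≤ ‖H'‖ := norm_nonneg _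
  have aθ0 : (0:ℝ) ≤ ‖θ‖ := norm_nonneg _
  have a1g_lo : (99:ℝ)/100 ≤ ‖1 + gv‖ := by
    have t1 : ‖(1:ℂ)‖ ≤ ‖1 + gv‖ + ‖gv‖ := by
      simpa using norm_add_le (1 + gv) (-gv)
    simp only [norm_one] at t1
    linarith
  have a1g_hi : ‖1 + gv‖ ≤ (101:ℝ)/100 := by
    have t1 : ‖1 + gv‖ ≤ ‖(1:ℂ)‖ + ‖gv‖ :=
      norm_add_le 1 gv
    simp only [norm_one] at t1
    linarith
  have a1h_lo : (99:ℝ)/100 ≤ ‖1 + hv‖ := by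
    have t1 : ‖(1:ℂ)‖ ≤ ‖1 + hv‖ + ‖hv‖ := by
      simpa using norm_add_le (1 + hv) (-hv)
    simp only [norm_one] at t1
    linarith
  have a1h_hi : ‖1 + hv‖ ≤ (101:ℝ)/100 := by
    have t1 : ‖1 + hv‖ ≤ ‖(1:ℂ)‖ + ‖hv‖ :=
      norm_add_le 1 hv
    simp only [norm_one] at t1
    linarith
  have h1g : (1 + gv) ≠ 0 := by
    intro e
    rw [e] at a1g_lo
    simp at a1g_lo
    linarith
  have hx0g : x₀ * (1 + gv) ≠ 0 := mul_ne_zero hx₀ h1g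
  -- derivatives
  have hGd : HasDerivAt (g x₀) G' θ := (hgdiff x₀ θ hx₀r hθ).hasDerivAt
  have hHd : HasDerivAt (h x₀) H' θ := (hhdiff x₀ θ hx₀r hθ).hasDerivAt
  have hu : HasDerivAt (fun t => x₀ * (1 + g x₀ t)) (x₀ * G') θ := by
    have := ((hasDerivAt_const θ (1:ℂ)).add hGd).const_mul x₀
    simpa using this
  have hzder : HasDerivAt z (-(x₀ * G') / (x₀ * (1 + gv)) ^ 2) θ := by
    rw [hz']
    simpa only [one_div] using hu.fun_inv hx0g
  have hNd : HasDerivAt (fun t => t * (1 + h x₀ t)) ((1 + hv) + θ * H') θ := by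
    have := (hasDerivAt_id θ).fun_mul ((hasDerivAt_const θ (1:ℂ)).fun_add hHd)
    simpa using this
  have hwder : HasDerivAt w
      ((((1 + hv) + θ * H') * (x₀ * (1 + gv)) - θ * (1 + hv) * (x₀ * G')) /
        (x₀ * (1 + gv)) ^ 2) θ := by
    rw [hw']
    exact hNd.div hu hx0g
  -- the denominator D
  set D : ℂ := (1 + gv) * (1 + hv) + θ * (H' * (1 + gv) - G' * (1 + hv)) with hD
  have aDlo : (1:ℝ)/2 < ‖D‖ := by
    have tA : ‖(1 + gv) * (1 + hv)‖ =
        ‖1 + gv‖ * ‖1 + hv‖ := norm_mul _ _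
    have tB : ‖θ * (H' * (1 + gv) - G' * (1 + hv))‖ ≤
        ‖θ‖ * (‖H'‖ * ‖1 + gv‖ +
          ‖G'‖ * ‖1 + hv‖) := by
      rw [norm_mul]
      apply mul_le_mul_of_nonneg_left _ aθ0
      calc ‖H' * (1 + gv) - G' * (1 + hv)‖
          ≤ ‖H' * (1 + gv)‖ + ‖G' * (1 + hv)‖ := by
            simpa [sub_eq_add_neg] using
              norm_add_le (H' * (1 + gv)) (-(G' * (1 + hv)))
        _ = ‖H'‖ * ‖1 + gv‖ +
            ‖G'‖ * ‖1 + hv‖ := by rw [norm_mul, norm_mul]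
    have tTri : ‖(1 + gv) * (1 + hv)‖ ≤
        ‖D‖ + ‖θ * (H' * (1 + gv) - G' * (1 + hv))‖ := by
      have := norm_add_le D (-(θ * (H' * (1 + gv) - G' * (1 + hv))))
      simpa [hD] using this
    have hB : ‖θ‖ * (‖H'‖ * ‖1 + gv‖ +
        ‖G'‖ * ‖1 + hv‖) ≤ r * (M * (101/100) + M * (101/100)) := by
      have h1 : ‖H'‖ * ‖1 + gv‖ ≤ M * (101/100) :=
        mul_le_mul aH a1g_hi (norm_nonneg _) hM0
      have h2 : ‖G'‖ * ‖1 + hv‖ ≤ M * (101/100) :=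
        mul_le_mul aG a1h_hi (norm_nonneg _) hM0
      apply mul_le_mul (le_of_lt hθ) (by linarith) (by positivity) (le_of_lt hr)
    have hA : (99:ℝ)/100 * (99/100) ≤ ‖D‖ +
        r * (M * (101/100) + M * (101/100)) := by
      have h1 : (99:ℝ)/100 * (99/100) ≤ ‖(1 + gv) * (1 + hv)‖ := by
        rw [tA]
        exact mul_le_mul a1g_lo a1h_lo (by norm_num) (norm_nonneg _)
      linarith [le_trans tTri (by linarith : ‖D‖ +
        ‖θ * (H' * (1 + gv) - G' * (1 + hv))‖ ≤
        ‖D‖ + r * (M * (101/100) + M * (101/100)))]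
    nlinarith [hMr, hr]
  have hDne : D ≠ 0 := by
    intro e
    rw [e] at aDlo
    simp at aDlo
    linarith
  rw [hzder.deriv, hwder.deriv]
  have hbig : ((1 + hv) + θ * H') * (x₀ * (1 + gv)) - θ * (1 + hv) * (x₀ * G') =
      x₀ * D := by rw [hD]; ring
  have key : -(x₀ * G') / (x₀ * (1 + gv)) ^ 2 /
      ((((1 + hv) + θ * H') * (x₀ * (1 + gv)) - θ * (1 + hv) * (x₀ * G')) /
        (x₀ * (1 + gv)) ^ 2) = -G' / D := by
    rw [hbig]
    field_simp
  rw [key]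
  rw [norm_div, norm_neg]
  rw [div_lt_iff₀ (by linarith : (0:ℝ) < ‖D‖)]
  nlinarith [aGK, hK, aDlo]
end

section
/- The holomorphic map ψ : ℂ → ℙ², ψ(z) = [z : p(z) : 1] for a fixed polynomial p, has derivative uniformly bounded over ℂ with respect to the Fubini–Study metric; that is, there exists C > 0 such that for all z ∈ ℂ, ds(ψ(z), dψ_z(∂/∂θ)) ≤ C, so ψ(ℂ) is a Brody curve in ℙ². -/
/-- The squared Fubini–Study norm of a tangent vector `(z',w')` at the point
`(z,w)` of the affine chart `ℂ² ⊂ ℙ²`. -/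
noncomputable def fsNormSq (z w z' w' : ℂ) : ℝ :=
  (‖z'‖ ^ 2 + ‖w'‖ ^ 2 + ‖z * w' - z' * w‖ ^ 2) /
    (1 + ‖z‖ ^ 2 + ‖w‖ ^ 2) ^ 2

open Polynomial

/-- Coefficient bound: a polynomial of `natDegree ≤ e` is bounded by `S * |z|^e` for `|z| ≥ 1`. -/
lemma aux_eval_bound (q : Polynomial ℂ) (e : ℕ) (h : q.natDegree ≤ e) :
    ∃ S : ℝ, 0 ≤ S ∧ ∀ z : ℂ, 1 ≤ ‖z‖ →
      ‖q.eval z‖ ≤ S * ‖z‖ ^ e := by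
  refine ⟨∑ i ∈ Finset.range (e + 1), ‖q.coeff i‖,
    Finset.sum_nonneg fun i _ => norm_nonneg _, fun z hz => ?_⟩
  rw [Polynomial.eval_eq_sum_range' (Nat.lt_succ_of_le h)]
  calc ‖∑ i ∈ Finset.range (e + 1), q.coeff i * z ^ i‖
      ≤ ∑ i ∈ Finset.range (e + 1), ‖q.coeff i * z ^ i‖ :=
        norm_sum_le _ _
    _ ≤ ∑ i ∈ Finset.range (e + 1), ‖q.coeff i‖ * ‖z‖ ^ e := by
        refine Finset.sum_le_sum fun i hi => ?_
        rw [norm_mul, norm_pow]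
        exact mul_le_mul_of_nonneg_left
          (pow_le_pow_right₀ hz (Nat.lt_succ_iff.mp (Finset.mem_range.mp hi)))
          (norm_nonneg _)
    _ = _ := by rw [← Finset.sum_mul]

lemma fs_bounded (p : Polynomial ℂ) :
    ∃ B : ℝ, ∀ z : ℂ, fsNormSq z (p.eval z) 1 (p.derivative.eval z) ≤ B := by
  have hden : ∀ z : ℂ, (1 : ℝ) ≤ (1 + ‖z‖ ^ 2 + ‖p.eval z‖ ^ 2) ^ 2 := by
    intro z
    nlinarith [norm_nonneg z, norm_nonneg (p.eval z), sq_nonneg (‖z‖),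
      sq_nonneg (‖p.eval z‖)]
  rcases Nat.eq_zero_or_pos p.natDegree with hd | hd
  · -- constant polynomial
    have hp : p = Polynomial.C (p.coeff 0) := Polynomial.eq_C_of_natDegree_eq_zero hd
    have hder : p.derivative = 0 := by rw [hp]; simp
    refine ⟨1 + ‖p.coeff 0‖ ^ 2, fun z => ?_⟩
    have hev : p.eval z = p.coeff 0 := by conv_lhs => rw [hp, eval_C]
    have : fsNormSq z (p.eval z) 1 (p.derivative.eval z)
        = (1 + ‖p.coeff 0‖ ^ 2) /
          (1 + ‖z‖ ^ 2 + ‖p.eval z‖ ^ 2) ^ 2 := by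
      simp [fsNormSq, hder, hev]
    rw [this]
    exact div_le_self (by positivity) (hden z)
  · -- nonconstant polynomial
    obtain ⟨e, he⟩ := Nat.exists_eq_succ_of_ne_zero hd.ne'
    set a := p.leadingCoeff with ha_def
    have ha : a ≠ 0 := leadingCoeff_ne_zero.mpr (fun h0 => by simp [h0] at hd)
    have haa : 0 < ‖a‖ := norm_pos_iff.mpr ha
    obtain ⟨Sr, hSr0, hSr⟩ := aux_eval_bound p.eraseLead e
      (by have := p.eraseLead_natDegree_le; omega)
    obtain ⟨S1, hS10, hS1⟩ := aux_eval_bound p.derivative p.natDegree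
      (le_trans (natDegree_derivative_le p) (Nat.sub_le _ _))
    obtain ⟨S2, hS20, hS2⟩ := aux_eval_bound (X * p.derivative - p) p.natDegree
      (by
        refine le_trans (natDegree_sub_le _ _) (max_le ?_ le_rfl)
        refine le_trans (natDegree_mul_le) ?_
        have h1 := natDegree_derivative_le p
        have h2 : (X : Polynomial ℂ).natDegree = 1 := natDegree_X
        omega)
    set c : ℝ := ‖a‖ / 2 with hc_def
    have hc : 0 < c := by positivity
    set R : ℝ := max 1 (2 * Sr / ‖a‖) with hR_def
    -- outside bound
    have houter : ∀ z : ℂ, R ≤ ‖z‖ →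
        fsNormSq z (p.eval z) 1 (p.derivative.eval z) ≤ (1 + S1 ^ 2 + S2 ^ 2) / c ^ 4 := by
      intro z hRz
      set t : ℝ := ‖z‖ with ht_def
      have ht1 : (1 : ℝ) ≤ t := le_trans (le_max_left _ _) hRz
      have ht0 : (0 : ℝ) < t := lt_of_lt_of_le one_pos ht1
      set u : ℝ := t ^ (e + 1) with hu_def
      have hu1 : (1 : ℝ) ≤ u := by
        calc (1:ℝ) = 1 ^ (e+1) := (one_pow _).symm
          _ ≤ t ^ (e+1) := pow_le_pow_left₀ zero_le_one ht1 _
      have hu0 : (0 : ℝ) < u := lt_of_lt_of_le one_pos hu1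
      have hu2 : (1 : ℝ) ≤ u ^ 2 := by nlinarith
      have hkey : Sr ≤ c * t := by
        have h := le_trans (le_max_right _ _) hRz
        rw [div_le_iff₀ haa] at h
        rw [hc_def]; linarith
      -- lower bound on |p(z)|
      have hlow : c * u ≤ ‖p.eval z‖ := by
        have hsplit : p.eval z = p.eraseLead.eval z + a * z ^ (e + 1) := by
          conv_lhs => rw [← p.eraseLead_add_C_mul_X_pow]
          rw [he]
          simp [ha_def]
        have h1 : ‖a * z ^ (e + 1)‖
            ≤ ‖p.eval z‖ + ‖p.eraseLead.eval z‖ := by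
          have heq : a * z ^ (e + 1) = p.eval z - p.eraseLead.eval z := by rw [hsplit]; ring
          rw [heq]
          simpa [sub_eq_add_neg] using norm_add_le (p.eval z) (-(p.eraseLead.eval z))
        have h2 : ‖a * z ^ (e + 1)‖ = ‖a‖ * u := by
          rw [norm_mul, norm_pow]
        have hrz : ‖p.eraseLead.eval z‖ ≤ Sr * t ^ e := hSr z ht1
        have h3 : Sr * t ^ e ≤ c * u := by
          calc Sr * t ^ e ≤ (c * t) * t ^ e :=
                mul_le_mul_of_nonneg_right hkey (pow_nonneg ht0.le _)
            _ = c * t ^ (e + 1) := by ring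
        have hca : ‖a‖ * u = 2 * (c * u) := by rw [hc_def]; ring
        linarith
      -- upper bounds on the numerator pieces
      have hb1 : ‖p.derivative.eval z‖ ≤ S1 * u := by
        have := hS1 z ht1
        rwa [he] at this
      have hb2 : ‖z * p.derivative.eval z - 1 * p.eval z‖ ≤ S2 * u := by
        have h := hS2 z ht1
        rw [he] at h
        have : (X * p.derivative - p).eval z = z * p.derivative.eval z - 1 * p.eval z := by
          simp
        rwa [this] at h
      have hb1' : ‖p.derivative.eval z‖ ^ 2 ≤ (S1 * u) ^ 2 :=
        pow_le_pow_left₀ (norm_nonneg _) hb1 2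
      have hb2' : ‖z * p.derivative.eval z - 1 * p.eval z‖ ^ 2 ≤ (S2 * u) ^ 2 :=
        pow_le_pow_left₀ (norm_nonneg _) hb2 2
      have hN : ‖(1 : ℂ)‖ ^ 2 + ‖p.derivative.eval z‖ ^ 2 +
          ‖z * p.derivative.eval z - 1 * p.eval z‖ ^ 2
          ≤ (1 + S1 ^ 2 + S2 ^ 2) * u ^ 2 := by
        rw [norm_one]
        nlinarith [sq_nonneg S1, sq_nonneg S2]
      -- lower bound on the denominator
      have hD : c ^ 4 * (u ^ 2 * u ^ 2) ≤ (1 + t ^ 2 + ‖p.eval z‖ ^ 2) ^ 2 := by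
        have h4 : (c * u) ^ 2 ≤ ‖p.eval z‖ ^ 2 :=
          pow_le_pow_left₀ (by positivity) hlow 2
        calc c ^ 4 * (u ^ 2 * u ^ 2) = ((c * u) ^ 2) ^ 2 := by ring
          _ ≤ (‖p.eval z‖ ^ 2) ^ 2 := pow_le_pow_left₀ (by positivity) h4 2
          _ ≤ (1 + t ^ 2 + ‖p.eval z‖ ^ 2) ^ 2 := by
              refine pow_le_pow_left₀ (by positivity) ?_ 2
              nlinarith [sq_nonneg t]
      have hfs : fsNormSq z (p.eval z) 1 (p.derivative.eval z)
          = (‖(1 : ℂ)‖ ^ 2 + ‖p.derivative.eval z‖ ^ 2 +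
              ‖z * p.derivative.eval z - 1 * p.eval z‖ ^ 2) /
            (1 + t ^ 2 + ‖p.eval z‖ ^ 2) ^ 2 := rfl
      rw [hfs]
      calc (‖(1 : ℂ)‖ ^ 2 + ‖p.derivative.eval z‖ ^ 2 +
              ‖z * p.derivative.eval z - 1 * p.eval z‖ ^ 2) /
            (1 + t ^ 2 + ‖p.eval z‖ ^ 2) ^ 2
          ≤ ((1 + S1 ^ 2 + S2 ^ 2) * u ^ 2) / (c ^ 4 * (u ^ 2 * u ^ 2)) :=
            div_le_div₀ (by positivity) hN (by positivity) hD
        _ = (1 + S1 ^ 2 + S2 ^ 2) / (c ^ 4 * u ^ 2) := by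
            field_simp
        _ ≤ (1 + S1 ^ 2 + S2 ^ 2) / c ^ 4 :=
            div_le_div₀ (by positivity) le_rfl (by positivity)
              (le_mul_of_one_le_right (by positivity) hu2)
    -- inside bound, by compactness
    have hcont : Continuous (fun z : ℂ => fsNormSq z (p.eval z) 1 (p.derivative.eval z)) := by
      unfold fsNormSq
      apply Continuous.div
      · apply Continuous.add
        apply Continuous.add
        · exact continuous_const
        · exact (continuous_norm.comp (p.derivative.continuous)).pow 2
        · apply Continuous.pow
          exact continuous_norm.comp
            ((continuous_id.mul p.derivative.continuous).sub (continuous_const.mul p.continuous))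
      · apply Continuous.pow
        apply Continuous.add
        apply Continuous.add
        · exact continuous_const
        · exact (continuous_norm).pow 2
        · exact (continuous_norm.comp p.continuous).pow 2
      · intro z
        positivity
    have hne : (Metric.closedBall (0 : ℂ) R).Nonempty :=
      ⟨0, Metric.mem_closedBall_self (le_trans zero_le_one (le_max_left _ _))⟩
    obtain ⟨z₀, _, hz₀⟩ := (isCompact_closedBall (0 : ℂ) R).exists_isMaxOn hne
      hcont.continuousOn
    refine ⟨max (fsNormSq z₀ (p.eval z₀) 1 (p.derivative.eval z₀))
      ((1 + S1 ^ 2 + S2 ^ 2) / c ^ 4), fun z => ?_⟩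
    rcases le_total (‖z‖) R with hzR | hzR
    · refine le_trans (hz₀ ?_) (le_max_left _ _)
      simpa [Metric.mem_closedBall, Complex.dist_eq] using hzR
    · exact le_trans (houter z hzR) (le_max_right _ _)

/-- The curve `z ↦ [z : p(z) : 1]` has uniformly bounded Fubini–Study derivative,
i.e. it is a Brody curve in `ℙ²`. -/
theorem stmt6 (p : Polynomial ℂ) :
    ∃ C > (0 : ℝ), ∀ z : ℂ,
      Real.sqrt (fsNormSq z (p.eval z) 1 (p.derivative.eval z)) ≤ C := by
  obtain ⟨B, hB⟩ := fs_bounded p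
  refine ⟨Real.sqrt B + 1, by positivity, fun z => ?_⟩
  have h1 : Real.sqrt (fsNormSq z (p.eval z) 1 (p.derivative.eval z)) ≤ Real.sqrt B :=
    Real.sqrt_le_sqrt (hB z)
  linarith
end

section
/- The holomorphic map ψ : ℂ → ℂ² ⊂ ℙ² given by ψ(θ) = (e^θ, e^{iθ²}) is not Brody: the Fubini–Study norm ds(ψ(θ), dψ_θ(d/dθ)) is unbounded as θ ranges over ℂ. -/
/-- The map `θ ↦ (e^θ, e^{iθ²})` is not Brody: its Fubini–Study derivative norm
is unbounded over `ℂ`. (Its derivative at `θ` is `(e^θ, 2iθ·e^{iθ²})`.) -/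
theorem stmt7 :
    ∀ C : ℝ, ∃ θ : ℂ,
      C < Real.sqrt (fsNormSq (Complex.exp θ) (Complex.exp (Complex.I * θ ^ 2))
        (Complex.exp θ) (2 * Complex.I * θ * Complex.exp (Complex.I * θ ^ 2))) := by
  intro C
  set t : ℝ := 3 * |C| + 3 with ht
  have ht0 : (0 : ℝ) < t := by positivity
  set θ : ℂ := (t : ℂ) * Complex.I with hθ
  refine ⟨θ, ?_⟩
  have hz : ‖Complex.exp θ‖ = 1 := by
    rw [Complex.norm_exp, hθ]; simp
  have hθ2 : Complex.I * θ ^ 2 = -(t ^ 2 : ℝ) * Complex.I := by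
    rw [hθ, mul_pow, Complex.I_sq]; push_cast; ring
  have hw : ‖Complex.exp (Complex.I * θ ^ 2)‖ = 1 := by
    rw [hθ2, Complex.norm_exp]; simp [pow_two, Complex.mul_im]
  have hw' : ‖2 * Complex.I * θ * Complex.exp (Complex.I * θ ^ 2)‖ = 2 * t := by
    rw [norm_mul, hw, mul_one, hθ]
    rw [show (2 : ℂ) * Complex.I * ((t : ℂ) * Complex.I) = -(2 * t : ℝ) by
      push_cast; rw [mul_assoc, mul_comm Complex.I, mul_assoc, Complex.I_mul_I]; ring]
    rw [norm_neg, Complex.norm_real, Real.norm_eq_abs, abs_of_pos (by linarith)]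
  have hcross : ‖Complex.exp θ * (2 * Complex.I * θ * Complex.exp (Complex.I * θ ^ 2))
      - Complex.exp θ * Complex.exp (Complex.I * θ ^ 2)‖ = 2 * t + 1 := by
    have : Complex.exp θ * (2 * Complex.I * θ * Complex.exp (Complex.I * θ ^ 2))
        - Complex.exp θ * Complex.exp (Complex.I * θ ^ 2)
        = Complex.exp θ * Complex.exp (Complex.I * θ ^ 2) * (2 * Complex.I * θ - 1) := by ring
    rw [this, norm_mul, norm_mul, hz, hw, one_mul, one_mul, hθ]
    rw [show (2 : ℂ) * Complex.I * ((t : ℂ) * Complex.I) - 1 = -((2 * t + 1 : ℝ) : ℂ) by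
      push_cast; rw [mul_assoc, mul_comm Complex.I, mul_assoc, Complex.I_mul_I]; ring]
    rw [norm_neg, Complex.norm_real, Real.norm_eq_abs, abs_of_pos (by linarith)]
  have hval : fsNormSq (Complex.exp θ) (Complex.exp (Complex.I * θ ^ 2))
      (Complex.exp θ) (2 * Complex.I * θ * Complex.exp (Complex.I * θ ^ 2))
      = (1 + (2 * t) ^ 2 + (2 * t + 1) ^ 2) / 9 := by
    rw [fsNormSq, hz, hw, hw', hcross]; norm_num
  rw [hval]
  have h1 : (|C| + 1) ^ 2 ≤ (1 + (2 * t) ^ 2 + (2 * t + 1) ^ 2) / 9 := by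
    have habs : (0 : ℝ) ≤ |C| := abs_nonneg C
    rw [ht]; nlinarith [sq_nonneg (|C| + 1)]
  have h2 : (|C| + 1 : ℝ) ≤ Real.sqrt ((1 + (2 * t) ^ 2 + (2 * t + 1) ^ 2) / 9) := by
    rw [show (|C| + 1 : ℝ) = Real.sqrt ((|C| + 1) ^ 2) from
      (Real.sqrt_sq (by positivity)).symm]
    exact Real.sqrt_le_sqrt h1
  calc C ≤ |C| := le_abs_self C
    _ < |C| + 1 := by linarith
    _ ≤ _ := h2
end

section
/- For each integer n ≥ 3, the holomorphic map f_n : ℂ → ℂ² ⊂ ℙ², f_n(z) = (z, exp(z^n)), is injective but is not Brody: the Fubini–Study norm of its derivative is unbounded on ℂ. -/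
/-- For `n ≥ 3`, the map `z ↦ (z, exp(z^n))` is injective but not Brody:
its Fubini–Study derivative norm (its derivative at `z` is
`(1, n·z^{n−1}·exp(z^n))`) is unbounded on `ℂ`. -/
theorem stmt8 (n : ℕ) (hn : 3 ≤ n) :
    Function.Injective (fun z : ℂ => (z, Complex.exp (z ^ n))) ∧
    ∀ C : ℝ, ∃ z : ℂ,
      C < Real.sqrt (fsNormSq z (Complex.exp (z ^ n)) 1
        ((n : ℂ) * z ^ (n - 1) * Complex.exp (z ^ n))) := by
  constructor
  · intro a b hab
    exact congrArg Prod.fst hab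
  · intro C
    set r : ℝ := max (3 * |C| + 3) 2 with hrdef
    have hr2 : (2:ℝ) ≤ r := le_max_right _ _
    have hrC : 3 * |C| + 3 ≤ r := le_max_left _ _
    have hr0 : (0:ℝ) < r := by linarith
    have hr1 : (1:ℝ) ≤ r := by linarith
    set c : ℂ := Complex.exp (Complex.I * (Real.pi / (2 * n))) with hcdef
    set z : ℂ := (r : ℂ) * c with hzdef
    refine ⟨z, ?_⟩
    have hn0 : (n:ℂ) ≠ 0 := by
      exact_mod_cast Nat.cast_ne_zero.mpr (by omega)
    have hcn : c ^ n = Complex.I := by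
      rw [hcdef, ← Complex.exp_nat_mul]
      have h1 : (n:ℂ) * (Complex.I * (Real.pi / (2 * n))) =
          ((Real.pi / 2 : ℝ) : ℂ) * Complex.I := by
        push_cast
        field_simp
      rw [h1, Complex.exp_mul_I]
      simp [← Complex.ofReal_cos, ← Complex.ofReal_sin,
        Real.cos_pi_div_two, Real.sin_pi_div_two]
    have hzn : z ^ n = (r:ℂ) ^ n * Complex.I := by
      rw [hzdef, mul_pow, hcn]
    have habsc : ‖c‖ = 1 := by
      have h3 : Complex.I * ((Real.pi : ℂ) / (2 * n)) =
          ((Real.pi / (2 * n) : ℝ) : ℂ) * Complex.I := by push_cast; ring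
      rw [hcdef, h3, Complex.norm_exp]
      rw [Complex.mul_I_re, Complex.ofReal_im, neg_zero, Real.exp_zero]
    have habsz : ‖z‖ = r := by
      rw [hzdef, norm_mul, habsc, mul_one, Complex.norm_real, Real.norm_eq_abs, abs_of_pos hr0]
    have habsw : ‖Complex.exp (z ^ n)‖ = 1 := by
      rw [hzn, ← Complex.ofReal_pow, Complex.norm_exp]
      rw [Complex.mul_I_re, Complex.ofReal_im, neg_zero, Real.exp_zero]
    -- the key tangent-vector term
    have hzz : z * z ^ (n - 1) = z ^ n := by
      rw [← pow_succ']
      congr 1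
      omega
    have hkey : z * ((n:ℂ) * z ^ (n - 1) * Complex.exp (z ^ n)) -
        1 * Complex.exp (z ^ n) =
        ((n:ℂ) * z ^ n - 1) * Complex.exp (z ^ n) := by
      have h2 : z * ((n:ℂ) * z ^ (n - 1) * Complex.exp (z ^ n)) =
          (n:ℂ) * z ^ n * Complex.exp (z ^ n) := by
        rw [← hzz]; ring
      rw [h2]; ring
    set a : ℝ := (n:ℝ) * r ^ n with hadef
    have ha0 : 0 ≤ a := by positivity
    have haI : (n:ℂ) * z ^ n - 1 = (a:ℂ) * Complex.I - 1 := by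
      rw [hzn, hadef]
      push_cast
      ring
    have hA : a ≤ ‖z * ((n:ℂ) * z ^ (n - 1) * Complex.exp (z ^ n)) -
        1 * Complex.exp (z ^ n)‖ := by
      rw [hkey, norm_mul, habsw, mul_one, haI]
      have him : ((a:ℂ) * Complex.I - 1).im = a := by simp
      calc a = |((a:ℂ) * Complex.I - 1).im| := by rw [him, abs_of_nonneg ha0]
        _ ≤ ‖(a:ℂ) * Complex.I - 1‖ := Complex.abs_im_le_norm _
    -- lower bound a ≥ 3 r^3
    have hrn : r ^ 3 ≤ r ^ n := pow_le_pow_right₀ hr1 hn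
    have han : 3 * r ^ 3 ≤ a := by
      rw [hadef]
      have hn3 : (3:ℝ) ≤ (n:ℝ) := by exact_mod_cast hn
      nlinarith [pow_nonneg hr0.le 3, pow_nonneg hr0.le n]
    -- main bound on fsNormSq
    have hmain : r ^ 2 ≤ fsNormSq z (Complex.exp (z ^ n)) 1
        ((n:ℂ) * z ^ (n - 1) * Complex.exp (z ^ n)) := by
      rw [fsNormSq, habsz, habsw, norm_one]
      rw [le_div_iff₀ (by positivity)]
      have hB : (0:ℝ) ≤ ‖(n:ℂ) * z ^ (n - 1) * Complex.exp (z ^ n)‖ ^ 2 := by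
        positivity
      have hA2 : a ^ 2 ≤ ‖z * ((n:ℂ) * z ^ (n - 1) * Complex.exp (z ^ n)) -
          1 * Complex.exp (z ^ n)‖ ^ 2 := by
        apply pow_le_pow_left₀ ha0 hA
      nlinarith [sq_nonneg r, sq_nonneg (r^2 - 2), pow_nonneg hr0.le 3, sq_nonneg (r^3)]
    -- conclude
    have hCr : C < r := by
      have := le_abs_self C
      linarith
    calc C < r := hCr
      _ = Real.sqrt (r ^ 2) := (Real.sqrt_sq hr0.le).symm
      _ ≤ _ := Real.sqrt_le_sqrt hmain
end
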